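/- For every J-self-orthogonal subspace D of ℂ⁴ there exists a unitary operator U : ℂ⁴₊ → ℂ⁴₋ such that D = D_U = {v + Uv : v ∈ ℂ⁴₊}. -/

import Mathlib

open Complex ComplexConjugate Matrix

/-- The matrix `J = (1/2)·[[0, −i, 0, 0], [i, 0, 0, 0], [0, 0, 0, i], [0, 0, −i, 0]]`. -/
noncomputable def Jmat : Matrix (Fin 4) (Fin 4) ℂ :=
  (1 / 2 : ℂ) • !![0, -I, 0, 0; I, 0, 0, 0; 0, 0, 0, I; 0, 0, -I, 0]

/-- `P₊ = (1/2)I + J`. -/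
noncomputable def Pplus : Matrix (Fin 4) (Fin 4) ℂ := (1 / 2 : ℂ) • 1 + Jmat

/-- `P₋ = (1/2)I − J`. -/
noncomputable def Pminus : Matrix (Fin 4) (Fin 4) ℂ := (1 / 2 : ℂ) • 1 - Jmat

/-- The standard Hermitian inner product on `ℂ⁴`, conjugate-linear in the second argument. -/
noncomputable def herm (x y : Fin 4 → ℂ) : ℂ := ∑ i, x i * conj (y i)

/-- `ℂ⁴₊ = P₊(ℂ⁴)`, the range of `P₊`. -/
noncomputable def Cplus : Submodule ℂ (Fin 4 → ℂ) := LinearMap.range Pplus.mulVecLin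

/-- `ℂ⁴₋ = P₋(ℂ⁴)`, the range of `P₋`. -/
noncomputable def Cminus : Submodule ℂ (Fin 4 → ℂ) := LinearMap.range Pminus.mulVecLin

abbrev E4 := EuclideanSpace ℂ (Fin 4)

lemma herm_eq_inner (x y : E4) : herm x y = inner ℂ y x := by
  simp [herm, PiLp.inner_apply, mul_comm]

lemma herm_mulVec (A : Matrix (Fin 4) (Fin 4) ℂ) (x y : Fin 4 → ℂ) :
    herm (A.mulVec x) y = herm x (Aᴴ.mulVec y) := by
  simp only [herm, Matrix.mulVec, dotProduct, Finset.sum_mul, Finset.mul_sum, map_sum,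
    _root_.map_mul, Matrix.conjTranspose_apply, RCLike.star_def, Complex.conj_conj]
  rw [Finset.sum_comm]
  refine Finset.sum_congr rfl fun i _ => Finset.sum_congr rfl fun j _ => by ring

lemma herm_sub_right (x u v : Fin 4 → ℂ) : herm x (u - v) = herm x u - herm x v := by
  simp [herm, mul_sub, Finset.sum_sub_distrib]

lemma herm_smul_right (c : ℂ) (x u : Fin 4 → ℂ) : herm x (c • u) = conj c * herm x u := by
  simp [herm, Finset.mul_sum]; refine Finset.sum_congr rfl fun i _ => by ring

lemma herm_self_eq_zero {z : Fin 4 → ℂ} (h : herm z z = 0) : z = 0 := by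
  have h2 : ((∑ i, Complex.normSq (z i) : ℝ) : ℂ) = 0 := by
    rw [← h]; simp [herm, Complex.mul_conj]
  have h3 : (∑ i, Complex.normSq (z i) : ℝ) = 0 := by exact_mod_cast h2
  have h4 : ∀ i ∈ Finset.univ, Complex.normSq (z i) = 0 := by
    refine (Finset.sum_eq_zero_iff_of_nonneg fun i _ => Complex.normSq_nonneg _).mp h3
  funext i
  exact Complex.normSq_eq_zero.mp (h4 i (Finset.mem_univ i))

lemma hJ2 : Jmat * Jmat = (1/4 : ℂ) • 1 := by
  ext i j
  fin_cases i <;> fin_cases j <;>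
    simp [Jmat, Matrix.mul_apply, Fin.sum_univ_four, Matrix.one_apply, Matrix.vecHead,
      Matrix.vecTail] <;> ring_nf <;> simp [Complex.I_sq] <;> ring

lemma hJH : Jmatᴴ = Jmat := by
  ext i j
  fin_cases i <;> fin_cases j <;> simp [Jmat, Matrix.vecHead, Matrix.vecTail]

lemma hPP : Pplus * Pplus = Pplus := by
  unfold Pplus
  simp only [add_mul, mul_add, smul_mul_assoc, mul_smul_comm, one_mul, mul_one, hJ2]
  module

lemma hQQ : Pminus * Pminus = Pminus := by
  unfold Pminus
  simp only [sub_mul, mul_sub, smul_mul_assoc, mul_smul_comm, one_mul, mul_one, hJ2]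
  module

lemma hPQ : Pplus * Pminus = 0 := by
  unfold Pplus Pminus
  simp only [add_mul, mul_add, sub_mul, mul_sub, smul_mul_assoc, mul_smul_comm, one_mul,
    mul_one, hJ2]
  module

lemma hQP : Pminus * Pplus = 0 := by
  unfold Pplus Pminus
  simp only [add_mul, mul_add, sub_mul, mul_sub, smul_mul_assoc, mul_smul_comm, one_mul,
    mul_one, hJ2]
  module

lemma hPQ1 : Pplus + Pminus = 1 := by unfold Pplus Pminus; module

lemma hPH : Pplusᴴ = Pplus := by
  unfold Pplus
  rw [Matrix.conjTranspose_add, Matrix.conjTranspose_smul, hJH, Matrix.conjTranspose_one]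
  norm_num

lemma hQH : Pminusᴴ = Pminus := by
  unfold Pminus
  rw [Matrix.conjTranspose_sub, Matrix.conjTranspose_smul, hJH, Matrix.conjTranspose_one]
  norm_num

lemma hJPQ : Jmat = (1/2 : ℂ) • Pplus - (1/2 : ℂ) • Pminus := by unfold Pplus Pminus; module

/-- The key identity for the indefinite form. -/
lemma form_eq (x y : Fin 4 → ℂ) :
    herm x (Jmat.mulVec y) =
      (1/2 : ℂ) * herm (Pplus.mulVec x) (Pplus.mulVec y)
        - (1/2 : ℂ) * herm (Pminus.mulVec x) (Pminus.mulVec y) := by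
  have h1 : herm (Pplus.mulVec x) (Pplus.mulVec y) = herm x (Pplus.mulVec y) := by
    rw [herm_mulVec, Matrix.mulVec_mulVec, hPH, hPP]
  have h2 : herm (Pminus.mulVec x) (Pminus.mulVec y) = herm x (Pminus.mulVec y) := by
    rw [herm_mulVec, Matrix.mulVec_mulVec, hQH, hQQ]
  rw [h1, h2, hJPQ]
  rw [Matrix.sub_mulVec, herm_sub_right, Matrix.smul_mulVec, Matrix.smul_mulVec,
    herm_smul_right, herm_smul_right]
  norm_num [Complex.conj_ofNat]

/-- for every `J`-self-orthogonal subspace `D` of `ℂ⁴` there exists a unitary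
operator `U : ℂ⁴₊ → ℂ⁴₋` (a bijective inner-product-preserving linear map) such that
`D = D_U = {v + Uv : v ∈ ℂ⁴₊}`. -/
theorem J_self_orthogonal_is_graph_of_unitary (D : Submodule ℂ (Fin 4 → ℂ))
    (hD : (D : Set (Fin 4 → ℂ)) = {x | ∀ y ∈ D, herm x (Jmat.mulVec y) = 0}) :
    ∃ U : Cplus →ₗ[ℂ] Cminus, Function.Bijective U ∧
      (∀ v w : Cplus, herm (U v : Fin 4 → ℂ) (U w : Fin 4 → ℂ) = herm v w) ∧
      (D : Set (Fin 4 → ℂ)) =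
        {x : Fin 4 → ℂ | ∃ v : Cplus, (v : Fin 4 → ℂ) + (U v : Fin 4 → ℂ) = x} := by
  have hmem : ∀ x, x ∈ D ↔ ∀ y ∈ D, herm x (Jmat.mulVec y) = 0 := by
    intro x
    constructor
    · intro hx; exact (hD ▸ hx : x ∈ {x | ∀ y ∈ D, herm x (Jmat.mulVec y) = 0})
    · intro hx; exact (Set.ext_iff.mp hD x).mpr hx
  set p := Pplus.mulVecLin with hp
  set q := Pminus.mulVecLin with hq
  have happ : ∀ (A : Matrix (Fin 4) (Fin 4) ℂ) (x : Fin 4 → ℂ), A.mulVecLin x = A.mulVec x :=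
    fun _ _ => rfl
  have hsum : ∀ x, p x + q x = x := by
    intro x
    have : (Pplus + Pminus).mulVec x = (1 : Matrix (Fin 4) (Fin 4) ℂ).mulVec x := by rw [hPQ1]
    rwa [Matrix.add_mulVec, Matrix.one_mulVec] at this
  have hpp : ∀ x, p (p x) = p x := by
    intro x; show Pplus.mulVec (Pplus.mulVec x) = _
    rw [Matrix.mulVec_mulVec, hPP]; rfl
  have hqq : ∀ x, q (q x) = q x := by
    intro x; show Pminus.mulVec (Pminus.mulVec x) = _
    rw [Matrix.mulVec_mulVec, hQQ]; rfl
  have hqp : ∀ x, q (p x) = 0 := by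
    intro x; show Pminus.mulVec (Pplus.mulVec x) = _
    rw [Matrix.mulVec_mulVec, hQP, Matrix.zero_mulVec]
  have hpq : ∀ x, p (q x) = 0 := by
    intro x; show Pplus.mulVec (Pminus.mulVec x) = _
    rw [Matrix.mulVec_mulVec, hPQ, Matrix.zero_mulVec]
  have form : ∀ x y, herm x (Jmat.mulVec y) =
      (1/2 : ℂ) * herm (p x) (p y) - (1/2 : ℂ) * herm (q x) (q y) := fun x y => form_eq x y
  -- norms are equal on D
  have hnorm : ∀ x ∈ D, herm (p x) (p x) = herm (q x) (q x) := by
    intro x hx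
    have h0 := (hmem x).mp hx x hx
    rw [form x x] at h0
    have := sub_eq_zero.mp h0
    field_simp at this
    exact this
  have hker_p : ∀ x ∈ D, p x = 0 → x = 0 := by
    intro x hx h0
    have : herm (q x) (q x) = 0 := by rw [← hnorm x hx, h0]; simp [herm]
    have hq0 : q x = 0 := herm_self_eq_zero this
    have := hsum x
    rw [h0, hq0, add_zero] at this
    exact this.symm
  have hker_q : ∀ x ∈ D, q x = 0 → x = 0 := by
    intro x hx h0
    have : herm (p x) (p x) = 0 := by rw [hnorm x hx, h0]; simp [herm]
    have hp0 : p x = 0 := herm_self_eq_zero this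
    have := hsum x
    rw [h0, hp0, add_zero] at this
    exact this.symm
  -- surjectivity onto Cplus
  have hsurj_p : ∀ v ∈ Cplus, ∃ x ∈ D, p x = v := by
    intro v hv
    obtain ⟨u, hu⟩ := hv
    have hpv : p v = v := by rw [← hu]; exact hpp u
    have hqv : q v = 0 := by rw [← hu]; exact hqp u
    let D' : Submodule ℂ E4 := D.comap (WithLp.linearEquiv 2 ℂ (Fin 4 → ℂ)).toLinearMap
    let p' : E4 →ₗ[ℂ] E4 := (WithLp.linearEquiv 2 ℂ (Fin 4 → ℂ)).symm.toLinearMap ∘ₗ p ∘ₗ (WithLp.linearEquiv 2 ℂ (Fin 4 → ℂ)).toLinearMap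
    let K : Submodule ℂ E4 := D'.map p'
    obtain ⟨k, hk, w, hw, hvkw⟩ := K.exists_add_mem_mem_orthogonal (WithLp.toLp 2 v)
    obtain ⟨x₀, hx₀, hpx₀⟩ := hk
    have hpk : p k = k := by rw [← hpx₀]; exact hpp x₀
    have hqk : q k = 0 := by rw [← hpx₀]; exact hqp x₀
    have hwvk := eq_sub_of_add_eq' hvkw.symm
    have hpw : p w = w := by
      have h1 : p w = p v - p k := by rw [hwvk]; exact map_sub p v k
      rw [h1, hpv, hpk]; exact congrArg WithLp.ofLp hwvk.symm
    have hqw : q w = 0 := by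
      have h1 : q w = q v - q k := by rw [hwvk]; exact map_sub q v k
      rw [h1, hqv, hqk, sub_zero]
    have hwD : (w : Fin 4 → ℂ) ∈ D := by
      rw [hmem]
      intro y hy
      rw [form, hqw]
      have : herm (p w) (p y) = 0 := by
        rw [hpw]
        have hmemK : WithLp.toLp 2 (p y) ∈ K := ⟨WithLp.toLp 2 y, hy, rfl⟩
        have := (Submodule.mem_orthogonal K w).mp hw _ hmemK
        exact (herm_eq_inner w (WithLp.toLp 2 (p y))).trans this
      rw [this]
      simp [herm]
    have hw0 : (w : Fin 4 → ℂ) = 0 := by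
      have hpw0 : herm (p w) (p w) = 0 := by rw [hnorm w hwD, hqw]; simp [herm]
      have : p w = 0 := herm_self_eq_zero hpw0
      rw [← hpw, this]
    refine ⟨x₀, hx₀, ?_⟩
    have hk' : p x₀ = k := congrArg WithLp.ofLp hpx₀
    rw [hk']
    have : v = k := by
      have h := congrArg WithLp.ofLp hvkw
      rw [WithLp.ofLp_add, hw0, add_zero] at h; exact h
    exact this.symm
  -- surjectivity onto Cminus
  have hsurj_q : ∀ v ∈ Cminus, ∃ x ∈ D, q x = v := by
    intro v hv
    obtain ⟨u, hu⟩ := hv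
    have hqv : q v = v := by rw [← hu]; exact hqq u
    have hpv : p v = 0 := by rw [← hu]; exact hpq u
    let D' : Submodule ℂ E4 := D.comap (WithLp.linearEquiv 2 ℂ (Fin 4 → ℂ)).toLinearMap
    let q' : E4 →ₗ[ℂ] E4 := (WithLp.linearEquiv 2 ℂ (Fin 4 → ℂ)).symm.toLinearMap ∘ₗ q ∘ₗ (WithLp.linearEquiv 2 ℂ (Fin 4 → ℂ)).toLinearMap
    let K : Submodule ℂ E4 := D'.map q'
    obtain ⟨k, hk, w, hw, hvkw⟩ := K.exists_add_mem_mem_orthogonal (WithLp.toLp 2 v)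
    obtain ⟨x₀, hx₀, hqx₀⟩ := hk
    have hqk : q k = k := by rw [← hqx₀]; exact hqq x₀
    have hpk : p k = 0 := by rw [← hqx₀]; exact hpq x₀
    have hwvk := eq_sub_of_add_eq' hvkw.symm
    have hqw : q w = w := by
      have h1 : q w = q v - q k := by rw [hwvk]; exact map_sub q v k
      rw [h1, hqv, hqk]; exact congrArg WithLp.ofLp hwvk.symm
    have hpw : p w = 0 := by
      have h1 : p w = p v - p k := by rw [hwvk]; exact map_sub p v k
      rw [h1, hpv, hpk, sub_zero]
    have hwD : (w : Fin 4 → ℂ) ∈ D := by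
      rw [hmem]
      intro y hy
      rw [form, hpw]
      have : herm (q w) (q y) = 0 := by
        rw [hqw]
        have hmemK : WithLp.toLp 2 (q y) ∈ K := ⟨WithLp.toLp 2 y, hy, rfl⟩
        have := (Submodule.mem_orthogonal K w).mp hw _ hmemK
        exact (herm_eq_inner w (WithLp.toLp 2 (q y))).trans this
      rw [this]
      simp [herm]
    have hw0 : (w : Fin 4 → ℂ) = 0 := by
      have hqw0 : herm (q w) (q w) = 0 := by rw [← hnorm w hwD, hpw]; simp [herm]
      have : q w = 0 := herm_self_eq_zero hqw0
      rw [← hqw, this]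
    refine ⟨x₀, hx₀, ?_⟩
    have hk' : q x₀ = k := congrArg WithLp.ofLp hqx₀
    rw [hk']
    have : v = k := by
      have h := congrArg WithLp.ofLp hvkw
      rw [WithLp.ofLp_add, hw0, add_zero] at h; exact h
    exact this.symm
  -- the maps
  have hmemCp : ∀ x : D, p (x : Fin 4 → ℂ) ∈ Cplus := fun x => ⟨x, rfl⟩
  have hmemCm : ∀ x : D, q (x : Fin 4 → ℂ) ∈ Cminus := fun x => ⟨x, rfl⟩
  let f₀ : D →ₗ[ℂ] Cplus := LinearMap.codRestrict Cplus (p ∘ₗ D.subtype) hmemCp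
  let g₀ : D →ₗ[ℂ] Cminus := LinearMap.codRestrict Cminus (q ∘ₗ D.subtype) hmemCm
  have hf₀ : Function.Bijective f₀ := by
    constructor
    · intro x y hxy
      have h1 : p (x : Fin 4 → ℂ) = p (y : Fin 4 → ℂ) := congrArg Subtype.val hxy
      have h2 : p ((x : Fin 4 → ℂ) - y) = 0 := by rw [map_sub, h1, sub_self]
      have h3 : ((x : Fin 4 → ℂ) - y) = 0 := hker_p _ (D.sub_mem x.2 y.2) h2
      exact Subtype.ext (sub_eq_zero.mp h3)
    · intro v
      obtain ⟨x, hx, hpx⟩ := hsurj_p (v : Fin 4 → ℂ) v.2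
      exact ⟨⟨x, hx⟩, Subtype.ext hpx⟩
  have hg₀ : Function.Bijective g₀ := by
    constructor
    · intro x y hxy
      have h1 : q (x : Fin 4 → ℂ) = q (y : Fin 4 → ℂ) := congrArg Subtype.val hxy
      have h2 : q ((x : Fin 4 → ℂ) - y) = 0 := by rw [map_sub, h1, sub_self]
      have h3 : ((x : Fin 4 → ℂ) - y) = 0 := hker_q _ (D.sub_mem x.2 y.2) h2
      exact Subtype.ext (sub_eq_zero.mp h3)
    · intro v
      obtain ⟨x, hx, hqx⟩ := hsurj_q (v : Fin 4 → ℂ) v.2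
      exact ⟨⟨x, hx⟩, Subtype.ext hqx⟩
  let f : D ≃ₗ[ℂ] Cplus := LinearEquiv.ofBijective f₀ hf₀
  refine ⟨g₀ ∘ₗ (f.symm : Cplus →ₗ[ℂ] D), ?_, ?_, ?_⟩
  · exact hg₀.comp f.symm.bijective
  · intro v w
    set x := f.symm v with hxdef
    set y := f.symm w with hydef
    have hxv : p (x : Fin 4 → ℂ) = (v : Fin 4 → ℂ) := congrArg Subtype.val (f.apply_symm_apply v)
    have hyw : p (y : Fin 4 → ℂ) = (w : Fin 4 → ℂ) := congrArg Subtype.val (f.apply_symm_apply w)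
    have hform := (hmem (x : Fin 4 → ℂ)).mp x.2 (y : Fin 4 → ℂ) y.2
    rw [form] at hform
    have heq : herm (p (x : Fin 4 → ℂ)) (p (y : Fin 4 → ℂ))
        = herm (q (x : Fin 4 → ℂ)) (q (y : Fin 4 → ℂ)) := by
      have := sub_eq_zero.mp hform
      field_simp at this
      exact this
    show herm (q (x : Fin 4 → ℂ)) (q (y : Fin 4 → ℂ)) = herm (v : Fin 4 → ℂ) (w : Fin 4 → ℂ)
    rw [← heq, hxv, hyw]
  · ext x
    constructor
    · intro hx
      refine ⟨f₀ ⟨x, hx⟩, ?_⟩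
      have hsymm : f.symm (f₀ ⟨x, hx⟩) = ⟨x, hx⟩ := f.symm_apply_apply ⟨x, hx⟩
      show (f₀ ⟨x, hx⟩ : Fin 4 → ℂ) + (g₀ (f.symm (f₀ ⟨x, hx⟩)) : Fin 4 → ℂ) = x
      rw [hsymm]
      show p x + q x = x
      exact hsum x
    · rintro ⟨v, rfl⟩
      set z := f.symm v with hzdef
      have hzv : p (z : Fin 4 → ℂ) = (v : Fin 4 → ℂ) := congrArg Subtype.val (f.apply_symm_apply v)
      have : (v : Fin 4 → ℂ) + (g₀ (f.symm v) : Fin 4 → ℂ) = (z : Fin 4 → ℂ) := by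
        show (v : Fin 4 → ℂ) + q (z : Fin 4 → ℂ) = (z : Fin 4 → ℂ)
        rw [← hzv]; exact hsum _
      show (v : Fin 4 → ℂ) + (g₀ (f.symm v) : Fin 4 → ℂ) ∈ (D : Set (Fin 4 → ℂ))
      rw [this]
      exact z.2
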